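/- XOR-universality of the idealized XEX2 hash (Lemma 2 of the paper): Let F be a finite field of characteristic 2, let α ∈ F be nonzero, let i₁, i₂ ∈ F and j₁, j₂ ∈ ℕ with (i₁, j₁) ≠ (i₂, j₂), and assume that if i₁ = i₂ then α^{j₁} ≠ α^{j₂}. Then for every z ∈ F, the number of permutations π of F satisfying α^{j₁}·π(i₁) + α^{j₂}·π(i₂) = z, multiplied by (|F| − 1), is at most the total number of permutations of F. Equivalently, for a uniformly random permutation π of F, the probability that α^{j₁}·π(i₁) + α^{j₂}·π(i₂) = z is at most 1/(|F| − 1); i.e. the hash family h_π(i, j) = α^j·π(i) is 1/(|F| − 1)-XOR universal. -/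

import Mathlib

open CharTwo in
private lemma xex2_aux {F : Type*} [Field F] [Fintype F] [CharP F 2]
    (S : Set (Equiv.Perm F))
    (Φ : ↥S × {t : F // t ≠ 0} → Equiv.Perm F) (hΦ : Function.Injective Φ) :
    S.ncard * (Fintype.card F - 1) ≤ Nat.card (Equiv.Perm F) := by
  classical
  have h1 : S.ncard = Fintype.card ↥S := by
    rw [Set.ncard_eq_toFinset_card' S, Set.toFinset_card]
  have h2 : Fintype.card {t : F // t ≠ 0} = Fintype.card F - 1 := by
    have := Fintype.card_subtype_compl (fun t : F => t = 0)
    simpa [Fintype.card_subtype_eq] using this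
  rw [Nat.card_eq_fintype_card, h1, ← h2, ← Fintype.card_prod]
  exact Fintype.card_le_of_injective Φ hΦ

theorem xex2_ideal_hash_xor_universal {F : Type*} [Field F] [Fintype F] [CharP F 2]
    (α : F) (hα : α ≠ 0) (i₁ i₂ : F) (j₁ j₂ : ℕ)
    (hne : (i₁, j₁) ≠ (i₂, j₂))
    (hij : i₁ = i₂ → α ^ j₁ ≠ α ^ j₂) (z : F) :
    Set.ncard {π : Equiv.Perm F | α ^ j₁ * π i₁ + α ^ j₂ * π i₂ = z} *
        (Fintype.card F - 1) ≤
      Nat.card (Equiv.Perm F) := by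
  classical
  set S : Set (Equiv.Perm F) :=
    {π : Equiv.Perm F | α ^ j₁ * π i₁ + α ^ j₂ * π i₂ = z} with hSdef
  by_cases hi : i₁ = i₂
  · -- π i₁ is determined: (α^{j₁} + α^{j₂}) * π i₁ = z
    have hβ : α ^ j₁ + α ^ j₂ ≠ 0 := by
      intro h
      apply hij hi
      have h2 := neg_eq_of_add_eq_zero_left h
      rw [CharTwo.neg_eq] at h2
      exact h2.symm
    set c : F := z / (α ^ j₁ + α ^ j₂) with hc
    have hmem : ∀ π : Equiv.Perm F, π ∈ S → π i₁ = c := by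
      intro π hπ
      have : (α ^ j₁ + α ^ j₂) * π i₁ = z := by
        have := hπ
        rw [hSdef] at this
        simp only [Set.mem_setOf_eq] at this
        rw [← this, ← hi]; ring
      rw [hc, eq_div_iff hβ]
      linear_combination this
    refine xex2_aux S
      (fun p => (Equiv.swap c (c + p.2.1)) * p.1.1) ?_
    rintro ⟨⟨π, hπ⟩, ⟨t, ht⟩⟩ ⟨⟨π', hπ'⟩, ⟨t', ht'⟩⟩ h
    simp only at h
    have h1 : ∀ (σ : Equiv.Perm F) (s : F), σ ∈ S →
        ((Equiv.swap c (c + s)) * σ) i₁ = c + s := by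
      intro σ s hσ
      simp [Equiv.Perm.mul_apply, hmem σ hσ, Equiv.swap_apply_left]
    have ht2 : c + t = c + t' := by
      rw [← h1 π t hπ, ← h1 π' t' hπ', h]
    have htt : t = t' := by
      exact add_left_cancel ht2
    subst htt
    have : π = π' := by
      have := mul_left_cancel h
      exact this
    simp [this]
  · -- i₁ ≠ i₂ : π i₁ determines π i₂
    have hα1 : α ^ j₁ ≠ 0 := pow_ne_zero _ hα
    have hα2 : α ^ j₂ ≠ 0 := pow_ne_zero _ hα
    refine xex2_aux S
      (fun p => (Equiv.swap (p.1.1 i₂) (p.1.1 i₁ + p.2.1)) * p.1.1) ?_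
    have key1 : ∀ (π : Equiv.Perm F) (t : F), π ∈ S → t ≠ 0 →
        ((Equiv.swap (π i₂) (π i₁ + t)) * π) i₁ = π i₁ := by
      intro π t hπ ht
      have hne12 : π i₁ ≠ π i₂ := fun h => hi (π.injective h)
      have hne1t : π i₁ ≠ π i₁ + t := by
        intro h
        apply ht
        have := add_left_cancel (a := π i₁) (b := (0:F)) (by simpa using h.symm)
        exact this.symm
      simp [Equiv.Perm.mul_apply, Equiv.swap_apply_of_ne_of_ne hne12 hne1t]
    have key2 : ∀ (π : Equiv.Perm F) (t : F), π ∈ S → t ≠ 0 →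
        ((Equiv.swap (π i₂) (π i₁ + t)) * π) i₂ = π i₁ + t := by
      intro π t hπ ht
      simp [Equiv.Perm.mul_apply, Equiv.swap_apply_left]
    rintro ⟨⟨π, hπ⟩, ⟨t, ht⟩⟩ ⟨⟨π', hπ'⟩, ⟨t', ht'⟩⟩ h
    simp only at h
    have ha : π i₁ = π' i₁ := by
      rw [← key1 π t hπ ht, ← key1 π' t' hπ' ht', h]
    have hb : π i₂ = π' i₂ := by
      have e1 : α ^ j₁ * π i₁ + α ^ j₂ * π i₂ = z := hπ
      have e2 : α ^ j₁ * π' i₁ + α ^ j₂ * π' i₂ = z := hπ'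
      have : α ^ j₂ * π i₂ = α ^ j₂ * π' i₂ := by
        rw [ha] at e1
        linear_combination e1 - e2
      exact mul_left_cancel₀ hα2 this
    have htt : t = t' := by
      have e := key2 π t hπ ht
      rw [h, key2 π' t' hπ' ht', ← ha] at e
      exact (add_left_cancel e).symm
    subst htt
    have hππ : π = π' := by
      rw [ha, hb] at h
      exact mul_left_cancel h
    simp [hππ, ha, hb]
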